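/- Let ρ : ℝ → ℝ be a bounded measurable function with ρ ≥ 0, compact support, and ∫ ρ(y) dy = 1 (a probability density), and let ᾱ ∈ (0,1). Define p(x) = ∫ gauss(√ᾱ·y, 1−ᾱ, x) · ρ(y) dy, and for each x ∈ ℝ let q_x denote the Gaussian probability measure on ℝ with mean x/√ᾱ and variance (1−ᾱ)/ᾱ. Then for every x ∈ ℝ: ∫ ρ dq_x > 0, p(x) > 0, p is differentiable at x, and p'(x)/p(x) = −x/(1−ᾱ) + (√ᾱ/(1−ᾱ)) · (∫ y·ρ(y) dq_x(y)) / (∫ ρ(y) dq_x(y)). -/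

import Mathlib

open MeasureTheory ProbabilityTheory

/-- Density at `x` of the one-dimensional normal distribution with mean `m`
and variance `v`: `gauss(m, v, x) = (2πv)^(−1/2) · exp(−(x − m)²/(2v))`. -/
noncomputable def gauss (m v x : ℝ) : ℝ :=
  (Real.sqrt (2 * Real.pi * v))⁻¹ * Real.exp (-(x - m) ^ 2 / (2 * v))

/-- The smoothed density `p(x) = ∫ gauss(√ᾱ·y, 1−ᾱ, x) · ρ(y) dy`. -/
noncomputable def smoothedDensityFn (ρ : ℝ → ℝ) (α : ℝ) (x : ℝ) : ℝ :=
  ∫ y, gauss (Real.sqrt α * y) (1 - α) x * ρ y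

/-- The Gaussian proposal measure `q_x` with mean `x/√ᾱ` and variance `(1−ᾱ)/ᾱ`. -/
noncomputable def proposal (α x : ℝ) : Measure ℝ :=
  gaussianReal (x / Real.sqrt α) (Real.toNNReal ((1 - α) / α))

open scoped NNReal ENNReal

lemma gauss_pos (m : ℝ) {v : ℝ} (hv : 0 < v) (x : ℝ) : 0 < gauss m v x := by
  unfold gauss
  have := Real.pi_pos
  positivity

lemma gauss_le (m : ℝ) {v : ℝ} (hv : 0 < v) (x : ℝ) :
    gauss m v x ≤ (Real.sqrt (2 * Real.pi * v))⁻¹ := by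
  have h1 : Real.exp (-(x - m) ^ 2 / (2 * v)) ≤ 1 := by
    apply Real.exp_le_one_iff.2
    apply div_nonpos_of_nonpos_of_nonneg (by nlinarith [sq_nonneg (x - m)]) (by linarith)
  calc gauss m v x ≤ (Real.sqrt (2 * Real.pi * v))⁻¹ * 1 :=
        mul_le_mul_of_nonneg_left h1 (by positivity)
    _ = _ := mul_one _

lemma hasDerivAt_gauss (m : ℝ) {v : ℝ} (hv : 0 < v) (x : ℝ) :
    HasDerivAt (gauss m v) (gauss m v x * (-(x - m) / v)) x := by
  have h1 : HasDerivAt (fun x : ℝ => -(x - m) ^ 2 / (2 * v))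
      (-(x - m) / v) x := by
    have h2 : HasDerivAt (fun x : ℝ => x - m) 1 x := (hasDerivAt_id x).sub_const m
    have h3 : HasDerivAt (fun x : ℝ => (x - m) ^ 2) (2 * (x - m) ^ 1 * 1) x := h2.pow 2
    have h4 := (h3.neg).div_const (2 * v)
    refine h4.congr_deriv ?_
    ring
  have h6 := (h1.exp).const_mul (Real.sqrt (2 * Real.pi * v))⁻¹
  refine (show HasDerivAt (gauss m v) _ x from h6).congr_deriv ?_
  unfold gauss
  ring

lemma integrable_of_ball {f : ℝ → ℝ} (hf : AEStronglyMeasurable f volume) (R K : ℝ)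
    (hsupp : ∀ y : ℝ, y ∉ Metric.closedBall (0:ℝ) R → f y = 0)
    (hK : ∀ y ∈ Metric.closedBall (0:ℝ) R, |f y| ≤ K) : Integrable f := by
  have hind : f = (Metric.closedBall (0:ℝ) R).indicator f := by
    ext y
    by_cases h : y ∈ Metric.closedBall (0:ℝ) R
    · simp [Set.indicator_of_mem h]
    · simp [Set.indicator_of_notMem h, hsupp y h]
  rw [hind]
  refine (Measure.integrableOn_of_bounded (M := K) measure_closedBall_lt_top.ne hf
    ?_).integrable_indicator measurableSet_closedBall
  exact (ae_restrict_iff' measurableSet_closedBall).2 (ae_of_all _ fun y hy => by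
    rw [Real.norm_eq_abs]; exact hK y hy)

lemma pdf_eq {α : ℝ} (hα0 : 0 < α) (hα1 : α < 1) (x y : ℝ) :
    gaussianPDFReal (x / Real.sqrt α) (Real.toNNReal ((1 - α) / α)) y
      = Real.sqrt α * gauss (Real.sqrt α * y) (1 - α) x := by
  have hs : (0:ℝ) < Real.sqrt α := Real.sqrt_pos.2 hα0
  have hs2 : Real.sqrt α ^ 2 = α := Real.sq_sqrt hα0.le
  have hv : (0:ℝ) < 1 - α := by linarith
  have hcoe : ((Real.toNNReal ((1 - α) / α)) : ℝ) = (1 - α) / α :=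
    Real.coe_toNNReal _ (by positivity)
  set u := x / Real.sqrt α with hu
  have hx : x = Real.sqrt α * u := by rw [hu, mul_div_cancel₀ _ hs.ne']
  rw [gaussianPDFReal, hcoe, gauss, hx]
  have hconst : (Real.sqrt (2 * Real.pi * ((1 - α) / α)))⁻¹
      = Real.sqrt α * (Real.sqrt (2 * Real.pi * (1 - α)))⁻¹ := by
    rw [show 2 * Real.pi * ((1 - α) / α) = (2 * Real.pi * (1 - α)) / α by ring,
      Real.sqrt_div (by positivity)]
    rw [inv_div]
    rw [div_eq_mul_inv, mul_comm]
  have hexp : -(y - u) ^ 2 / (2 * ((1 - α) / α))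
      = -(Real.sqrt α * u - Real.sqrt α * y) ^ 2 / (2 * (1 - α)) := by
    have h2 : (Real.sqrt α * u - Real.sqrt α * y) ^ 2 = α * (u - y) ^ 2 := by
      rw [← mul_sub, mul_pow, hs2]
    rw [h2]
    field_simp
    ring
  rw [hexp, hconst]
  ring_nf

lemma integral_gaussianReal_eq {m : ℝ} {v : ℝ≥0} (hv : v ≠ 0) (g : ℝ → ℝ) :
    ∫ y, g y ∂(gaussianReal m v) = ∫ y, gaussianPDFReal m v y * g y := by
  rw [gaussianReal_of_var_ne_zero _ hv]
  have hpdf : gaussianPDF m v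
      = fun y => ((Real.toNNReal (gaussianPDFReal m v y) : ℝ≥0) : ℝ≥0∞) := rfl
  rw [hpdf, integral_withDensity_eq_integral_smul
    ((measurable_gaussianPDFReal m v).real_toNNReal) g]
  congr 1
  ext y
  rw [NNReal.smul_def, smul_eq_mul, Real.coe_toNNReal _ (gaussianPDFReal_nonneg _ _ _)]

/-- for a bounded, nonnegative, compactly supported probability
density `ρ` and `ᾱ ∈ (0,1)`, the smoothed density `p` is positive and differentiable
everywhere, `∫ ρ dq_x > 0`, and the score satisfies
`p'(x)/p(x) = −x/(1−ᾱ) + (√ᾱ/(1−ᾱ)) · (∫ y·ρ(y) dq_x(y)) / (∫ ρ(y) dq_x(y))`. -/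
theorem score_as_proposal_reweighting
    (ρ : ℝ → ℝ) (hmeas : Measurable ρ) (hbdd : ∃ C, ∀ y, |ρ y| ≤ C)
    (hnn : ∀ y, 0 ≤ ρ y) (hcs : HasCompactSupport ρ)
    (hρ1 : ∫ y, ρ y = 1)
    (α : ℝ) (hα0 : 0 < α) (hα1 : α < 1) (x : ℝ) :
    0 < ∫ y, ρ y ∂(proposal α x) ∧
      0 < smoothedDensityFn ρ α x ∧
      DifferentiableAt ℝ (smoothedDensityFn ρ α) x ∧
      deriv (smoothedDensityFn ρ α) x / smoothedDensityFn ρ α x =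
        -x / (1 - α) + (Real.sqrt α / (1 - α)) *
          (∫ y, y * ρ y ∂(proposal α x)) / (∫ y, ρ y ∂(proposal α x)) := by
  obtain ⟨C, hC⟩ := hbdd
  have hv : (0:ℝ) < 1 - α := by linarith
  have hs : (0:ℝ) < Real.sqrt α := Real.sqrt_pos.2 hα0
  have hvnn : (Real.toNNReal ((1 - α) / α)) ≠ 0 :=
    (Real.toNNReal_pos.2 (by positivity)).ne'
  obtain ⟨R, hR⟩ := hcs.isBounded.subset_closedBall 0
  have hzero : ∀ y : ℝ, y ∉ Metric.closedBall (0:ℝ) R → ρ y = 0 := by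
    intro y hy
    by_contra h
    exact hy (hR (subset_tsupport ρ h))
  have hRnn : (0:ℝ) ≤ R := by
    by_contra h
    push_neg at h
    have : ∀ y : ℝ, ρ y = 0 := fun y => hzero y (by
      simp only [Metric.mem_closedBall, dist_zero_right]
      intro hy
      exact absurd (le_trans (norm_nonneg y) hy) (not_le.2 h))
    rw [show ρ = fun _ => (0:ℝ) from funext this] at hρ1
    simp at hρ1
  have hC0 : (0:ℝ) ≤ C := le_trans (abs_nonneg _) (hC 0)
  set c0 : ℝ := (Real.sqrt (2 * Real.pi * (1 - α)))⁻¹ with hc0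
  have hc0nn : (0:ℝ) ≤ c0 := inv_nonneg.2 (Real.sqrt_nonneg _)
  -- measurability of gauss in y
  have hgcont : ∀ x' : ℝ, Continuous (fun y => gauss (Real.sqrt α * y) (1 - α) x') := by
    intro x'
    unfold gauss
    fun_prop
  have hFmeas : ∀ x' : ℝ,
      AEStronglyMeasurable (fun y => gauss (Real.sqrt α * y) (1 - α) x' * ρ y) volume :=
    fun x' => ((hgcont x').measurable.mul hmeas).aestronglyMeasurable
  -- integrabilities
  have hI1 : ∀ x' : ℝ, Integrable (fun y => gauss (Real.sqrt α * y) (1 - α) x' * ρ y) := by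
    intro x'
    refine integrable_of_ball (hFmeas x') R (c0 * C) (fun y hy => by simp [hzero y hy])
      (fun y _ => ?_)
    rw [abs_mul, abs_of_nonneg (gauss_pos _ hv _).le]
    exact mul_le_mul (gauss_le _ hv _) (hC y) (abs_nonneg _) hc0nn
  have hI2 : Integrable (fun y => y * (gauss (Real.sqrt α * y) (1 - α) x * ρ y)) := by
    refine integrable_of_ball
      ((measurable_id.mul ((hgcont x).measurable.mul hmeas)).aestronglyMeasurable)
      R (R * (c0 * C)) (fun y hy => by simp [hzero y hy]) (fun y hy => ?_)
    have hyR : |y| ≤ R := by simpa [Metric.mem_closedBall, dist_zero_right] using hy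
    rw [abs_mul, abs_mul, abs_of_nonneg (gauss_pos _ hv _).le]
    exact mul_le_mul hyR (mul_le_mul (gauss_le _ hv _) (hC y) (abs_nonneg _) hc0nn)
      (mul_nonneg (gauss_pos _ hv _).le (abs_nonneg _)) hRnn
  -- positivity of p x
  have hpnn : 0 < smoothedDensityFn ρ α x := by
    have hge : 0 ≤ smoothedDensityFn ρ α x :=
      integral_nonneg fun y => mul_nonneg (gauss_pos _ hv _).le (hnn y)
    rcases hge.lt_or_eq with h | h
    · exact h
    · exfalso
      have h0 := (integral_eq_zero_iff_of_nonneg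
        (fun y => mul_nonneg (gauss_pos _ hv _).le (hnn y)) (hI1 x)).1 h.symm
      have hρ0 : ρ =ᵐ[volume] 0 := by
        filter_upwards [h0] with y hy
        rcases mul_eq_zero.1 hy with h' | h'
        · exact absurd h' (gauss_pos _ hv _).ne'
        · exact h'
      rw [integral_eq_zero_of_ae hρ0] at hρ1
      norm_num at hρ1
  -- differentiation under the integral
  set F : ℝ → ℝ → ℝ := fun x' y => gauss (Real.sqrt α * y) (1 - α) x' * ρ y with hF
  set F' : ℝ → ℝ → ℝ := fun x' y =>
    gauss (Real.sqrt α * y) (1 - α) x' * (-(x' - Real.sqrt α * y) / (1 - α)) * ρ y with hF'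
  set K : ℝ := c0 * ((|x| + 1 + Real.sqrt α * R) / (1 - α)) * C with hK
  have hbound : ∀ y : ℝ, ∀ x' ∈ Metric.ball x 1,
      ‖F' x' y‖ ≤ (Metric.closedBall (0:ℝ) R).indicator (fun _ => K) y := by
    intro y x' hx'
    by_cases hy : y ∈ Metric.closedBall (0:ℝ) R
    · rw [Set.indicator_of_mem hy]
      have hyR : |y| ≤ R := by simpa [Metric.mem_closedBall, dist_zero_right] using hy
      have hx'b : |x'| ≤ |x| + 1 := by
        have := mem_ball_iff_norm.1 hx'
        rw [Real.norm_eq_abs] at this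
        calc |x'| = |x + (x' - x)| := by ring_nf
          _ ≤ |x| + |x' - x| := abs_add_le _ _
          _ ≤ |x| + 1 := by linarith
      have hnum : |x' - Real.sqrt α * y| ≤ |x| + 1 + Real.sqrt α * R := by
        calc |x' - Real.sqrt α * y| ≤ |x'| + |Real.sqrt α * y| := abs_sub _ _
          _ = |x'| + Real.sqrt α * |y| := by rw [abs_mul, abs_of_nonneg hs.le]
          _ ≤ |x| + 1 + Real.sqrt α * R := by
              have := mul_le_mul_of_nonneg_left hyR hs.le
              linarith
      rw [Real.norm_eq_abs, hF']
      simp only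
      rw [abs_mul, abs_mul, abs_of_nonneg (gauss_pos _ hv _).le, abs_div,
        abs_neg, abs_of_nonneg hv.le]
      rw [hK]
      refine mul_le_mul (mul_le_mul (gauss_le _ hv _)
        ((div_le_div_iff_of_pos_right hv).2 hnum) (by positivity) hc0nn)
        (hC y) (abs_nonneg _) (by positivity)
    · rw [Set.indicator_of_notMem hy]
      simp [hF', hzero y hy]
  have hbint : Integrable ((Metric.closedBall (0:ℝ) R).indicator fun _ : ℝ => K) :=
    (integrableOn_const measure_closedBall_lt_top.ne).integrable_indicator
      measurableSet_closedBall
  have hdiff : ∀ y : ℝ, ∀ x' ∈ Metric.ball x 1,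
      HasDerivAt (fun x'' => F x'' y) (F' x' y) x' :=
    fun y x' _ => (hasDerivAt_gauss _ hv x').mul_const (ρ y)
  have hF'meas : AEStronglyMeasurable (F' x) volume := by
    apply Measurable.aestronglyMeasurable
    have h1 : Measurable fun y : ℝ =>
        gauss (Real.sqrt α * y) (1 - α) x * (-(x - Real.sqrt α * y) / (1 - α)) := by
      unfold gauss
      fun_prop
    exact h1.mul hmeas
  obtain ⟨hFint', hHasDeriv⟩ := hasDerivAt_integral_of_dominated_loc_of_deriv_le
    (F := F) (F' := F') (μ := volume) (x₀ := x)
    (bound := (Metric.closedBall (0:ℝ) R).indicator fun _ : ℝ => K) (Metric.ball_mem_nhds x one_pos)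
    (Filter.Eventually.of_forall fun x' => hFmeas x') (hI1 x) hF'meas
    (ae_of_all _ hbound) hbint (ae_of_all _ hdiff)
  have hpfun : smoothedDensityFn ρ α = fun x' => ∫ y, F x' y := rfl
  have hdiffAt : DifferentiableAt ℝ (smoothedDensityFn ρ α) x := by
    rw [hpfun]; exact hHasDeriv.differentiableAt
  have hderiv : deriv (smoothedDensityFn ρ α) x = ∫ y, F' x y := by
    rw [hpfun]; exact hHasDeriv.deriv
  -- split the derivative integral
  have hsplit : (fun y => F' x y) = fun y =>
      (-x / (1 - α)) * F x y + (Real.sqrt α / (1 - α)) * (y * F x y) := by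
    funext y
    rw [hF', hF]
    ring
  have hJ : ∫ y, F' x y = (-x / (1 - α)) * smoothedDensityFn ρ α x
      + (Real.sqrt α / (1 - α)) * ∫ y, y * F x y := by
    rw [hsplit, integral_add ((hI1 x).const_mul _) (hI2.const_mul _),
      integral_const_mul, integral_const_mul]
    rfl
  -- proposal integrals
  have hq1 : ∫ y, ρ y ∂(proposal α x) = Real.sqrt α * smoothedDensityFn ρ α x := by
    rw [proposal, integral_gaussianReal_eq hvnn]
    have h1 : (fun y => gaussianPDFReal (x / Real.sqrt α) (Real.toNNReal ((1 - α) / α)) y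
        * ρ y) = fun y => Real.sqrt α * F x y :=
      funext fun y => by rw [pdf_eq hα0 hα1 x y, hF]; ring
    rw [h1, integral_const_mul]
    rfl
  have hq2 : ∫ y, y * ρ y ∂(proposal α x) = Real.sqrt α * ∫ y, y * F x y := by
    rw [proposal, integral_gaussianReal_eq hvnn]
    have h1 : (fun y => gaussianPDFReal (x / Real.sqrt α) (Real.toNNReal ((1 - α) / α)) y
        * (y * ρ y)) = fun y => Real.sqrt α * (y * F x y) :=
      funext fun y => by rw [pdf_eq hα0 hα1 x y, hF]; ring
    rw [h1, integral_const_mul]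
  refine ⟨by rw [hq1]; exact mul_pos hs hpnn, hpnn, hdiffAt, ?_⟩
  rw [hderiv, hJ, hq1, hq2]
  have hPne : smoothedDensityFn ρ α x ≠ 0 := hpnn.ne'
  field_simp
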